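/- arXiv:2503.09004 — 3 statements merged into one kernel-verified Lean document; each statement's English description precedes it below -/
import Mathlib

section
/- The function H(x,y) = (1/16) x^{-2} (x-1)^2 (x^2 + 2x + 1 + 4y^2) is a first integral of the planar system ẋ = xy - x²y, ẏ = y² + (1/4)x³ + (1/4)x² + (1/4)x + 1/4; that is, along any solution with x ≠ 0 the derivative of H(x(t), y(t)) with respect to t is zero. -/
/-- H(x,y) = (1/16) x⁻² (x-1)² (x²+2x+1+4y²) is a first integral of
    ẋ = xy - x²y, ẏ = y² + (1/4)x³ + (1/4)x² + (1/4)x + 1/4: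
    along any solution with x ≠ 0, the derivative of H(x(t),y(t)) is zero. -/
theorem first_integral (x y : ℝ → ℝ) (t : ℝ)
    (hx : HasDerivAt x (x t * y t - (x t)^2 * y t) t)
    (hy : HasDerivAt y ((y t)^2 + (1/4)*(x t)^3 + (1/4)*(x t)^2 + (1/4)*(x t) + 1/4) t)
    (hx0 : x t ≠ 0) :
    HasDerivAt (fun s => (1/16) * ((x s)^2)⁻¹ * (x s - 1)^2
      * ((x s)^2 + 2*(x s) + 1 + 4*(y s)^2)) 0 t := by
  set dx := x t * y t - (x t)^2 * y t with hdx
  set dy := (y t)^2 + (1/4)*(x t)^3 + (1/4)*(x t)^2 + (1/4)*(x t) + 1/4 with hdy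
  have h1 : HasDerivAt (fun s => ((x s)^2)⁻¹)
      (-(2 * (x t)^1 * dx) / ((x t)^2)^2) t := (hx.pow 2).inv (pow_ne_zero 2 hx0)
  have h2 : HasDerivAt (fun s => (x s - 1)^2) (2 * (x t - 1)^1 * dx) t :=
    (hx.sub_const 1).pow 2
  have h3 : HasDerivAt (fun s => (x s)^2 + 2*(x s) + 1 + 4*(y s)^2)
      (2 * (x t)^1 * dx + 2 * dx + 4 * (2 * (y t)^1 * dy)) t := by
    have := (((hx.pow 2).add ((hx.const_mul 2))).add_const 1).add ((hy.pow 2).const_mul 4)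
    simpa [Pi.add_def] using this
  have h : HasDerivAt (fun s => (1/16) * ((x s)^2)⁻¹ * (x s - 1)^2
      * ((x s)^2 + 2*(x s) + 1 + 4*(y s)^2)) _ t := (((h1.const_mul (1/16 : ℝ)).mul h2).mul h3)
  convert h using 1
  have hne : (x t) ^ 2 ≠ 0 := pow_ne_zero 2 hx0
  simp only [Pi.mul_apply]
  field_simp
  ring
end

section
/- For k ∈ (0,1), the derivative with respect to z of the function F(z) = (√(1-k²z²)·∫₀^z √(1-k²s²)/√(1-s²) ds - k² z √(1-z²)) / ((1-k²)√(1-k²z²)) equals 1/(√(1-z²)(1-k²z²)^{3/2}) for z ∈ (0,1). -/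
open Real intervalIntegral

/-- For k ∈ (0,1) and z ∈ (0,1), the derivative of
    F(z) = (√(1-k²z²)·∫₀^z √(1-k²s²)/√(1-s²) ds - k²z√(1-z²)) / ((1-k²)√(1-k²z²))
    equals 1/(√(1-z²)(1-k²z²)^{3/2}). -/
theorem deriv_F (k : ℝ) (hk : k ∈ Set.Ioo (0:ℝ) 1)
    (z : ℝ) (hz : z ∈ Set.Ioo (0:ℝ) 1) :
    HasDerivAt (fun z =>
        (Real.sqrt (1 - k^2*z^2)
            * (∫ s in (0:ℝ)..z, Real.sqrt (1 - k^2*s^2) / Real.sqrt (1 - s^2))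
          - k^2 * z * Real.sqrt (1 - z^2))
        / ((1 - k^2) * Real.sqrt (1 - k^2*z^2)))
      (1 / (Real.sqrt (1 - z^2) * (1 - k^2*z^2) ^ ((3:ℝ)/2))) z := by
  obtain ⟨hk0, hk1⟩ := hk
  obtain ⟨hz0, hz1⟩ := hz
  have hk2 : k^2 < 1 := by nlinarith
  have hkne : (1 : ℝ) - k^2 ≠ 0 := by nlinarith
  have ha : (0:ℝ) < 1 - z^2 := by nlinarith
  have hb : (0:ℝ) < 1 - k^2*z^2 := by nlinarith
  have hsa : (0:ℝ) < Real.sqrt (1 - z^2) := Real.sqrt_pos.mpr ha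
  have hsb : (0:ℝ) < Real.sqrt (1 - k^2*z^2) := Real.sqrt_pos.mpr hb
  set f : ℝ → ℝ := fun s => Real.sqrt (1 - k^2*s^2) / Real.sqrt (1 - s^2) with hf
  -- continuity of f on (-1,1)
  have hcont : ∀ x ∈ Set.Ioo (-1:ℝ) 1, ContinuousAt f x := by
    intro x hx
    have hx2 : (0:ℝ) < 1 - x^2 := by nlinarith [hx.1, hx.2]
    exact ((Real.continuous_sqrt.comp (by continuity)).continuousAt).div
      ((Real.continuous_sqrt.comp (by continuity)).continuousAt)
      (ne_of_gt (Real.sqrt_pos.mpr hx2))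
  have hzmem : z ∈ Set.Ioo (-1:ℝ) 1 := ⟨by linarith, hz1⟩
  have hint : IntervalIntegrable f MeasureTheory.volume 0 z := by
    apply ContinuousOn.intervalIntegrable
    intro x hx
    have hx' : x ∈ Set.Ioo (-1:ℝ) 1 := by
      rcases Set.mem_uIcc.mp hx with h | h
      · exact ⟨by linarith [h.1], by linarith [h.2]⟩
      · exact ⟨by linarith [h.1], by linarith [h.2]⟩
    exact (hcont x hx').continuousWithinAt
  have hE : HasDerivAt (fun u => ∫ s in (0:ℝ)..u, f s)
      (Real.sqrt (1 - k^2*z^2) / Real.sqrt (1 - z^2)) z := by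
    exact intervalIntegral.integral_hasDerivAt_right hint
      (ContinuousAt.stronglyMeasurableAtFilter isOpen_Ioo hcont z hzmem)
      (hcont z hzmem)
  -- derivative of sqrt(1 - z^2)
  have hinnA : HasDerivAt (fun z : ℝ => 1 - z^2) (-(2*z)) z := by
    simpa using ((hasDerivAt_pow 2 z).const_sub 1)
  have hsaD : HasDerivAt (fun z : ℝ => Real.sqrt (1 - z^2))
      (-(2*z) / (2 * Real.sqrt (1 - z^2))) z := by
    have h := (Real.hasDerivAt_sqrt (ne_of_gt ha)).comp z hinnA
    refine h.congr_deriv ?_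
    ring
  have hinnB : HasDerivAt (fun z : ℝ => 1 - k^2*z^2) (-(k^2*(2*z))) z := by
    simpa [mul_comm, mul_assoc, mul_left_comm] using
      (((hasDerivAt_pow 2 z).const_mul (k^2)).const_sub 1)
  have hsbD : HasDerivAt (fun z : ℝ => Real.sqrt (1 - k^2*z^2))
      (-(k^2*(2*z)) / (2 * Real.sqrt (1 - k^2*z^2))) z := by
    have h := (Real.hasDerivAt_sqrt (ne_of_gt hb)).comp z hinnB
    refine h.congr_deriv ?_
    ring
  -- G(z) = E(z)/(1-k^2) - (k^2/(1-k^2)) * (z * sqrt(1-z^2) / sqrt(1-k^2 z^2))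
  have h1 : HasDerivAt (fun z : ℝ => z * Real.sqrt (1 - z^2))
      (1 * Real.sqrt (1 - z^2) + z * (-(2*z) / (2 * Real.sqrt (1 - z^2)))) z :=
    (hasDerivAt_id z).mul hsaD
  have h2 : HasDerivAt (fun z : ℝ => z * Real.sqrt (1 - z^2) / Real.sqrt (1 - k^2*z^2))
      (((1 * Real.sqrt (1 - z^2) + z * (-(2*z) / (2 * Real.sqrt (1 - z^2))))
          * Real.sqrt (1 - k^2*z^2)
        - z * Real.sqrt (1 - z^2) * (-(k^2*(2*z)) / (2 * Real.sqrt (1 - k^2*z^2))))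
        / (Real.sqrt (1 - k^2*z^2))^2) z :=
    h1.div hsbD (ne_of_gt hsb)
  have hG : HasDerivAt (fun z : ℝ => (∫ s in (0:ℝ)..z, f s) / (1 - k^2)
      - k^2/(1-k^2) * (z * Real.sqrt (1 - z^2) / Real.sqrt (1 - k^2*z^2)))
      (Real.sqrt (1 - k^2*z^2) / Real.sqrt (1 - z^2) / (1 - k^2)
        - k^2/(1-k^2) * (((1 * Real.sqrt (1 - z^2) + z * (-(2*z) / (2 * Real.sqrt (1 - z^2))))
          * Real.sqrt (1 - k^2*z^2)
        - z * Real.sqrt (1 - z^2) * (-(k^2*(2*z)) / (2 * Real.sqrt (1 - k^2*z^2))))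
        / (Real.sqrt (1 - k^2*z^2))^2)) z :=
    (hE.div_const _).sub (h2.const_mul _)
  have heq : (fun z =>
        (Real.sqrt (1 - k^2*z^2)
            * (∫ s in (0:ℝ)..z, Real.sqrt (1 - k^2*s^2) / Real.sqrt (1 - s^2))
          - k^2 * z * Real.sqrt (1 - z^2))
        / ((1 - k^2) * Real.sqrt (1 - k^2*z^2)))
      =ᶠ[nhds z] (fun z : ℝ => (∫ s in (0:ℝ)..z, f s) / (1 - k^2)
      - k^2/(1-k^2) * (z * Real.sqrt (1 - z^2) / Real.sqrt (1 - k^2*z^2))) := by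
    filter_upwards [isOpen_Ioo.mem_nhds hzmem] with x hx
    have hbx : (0:ℝ) < 1 - k^2*x^2 := by nlinarith [hx.1, hx.2]
    have hsbx : (0:ℝ) < Real.sqrt (1 - k^2*x^2) := Real.sqrt_pos.mpr hbx
    field_simp
    ring
  refine HasDerivAt.congr_of_eventuallyEq ?_ heq
  refine hG.congr_deriv ?_
  have sa2 : Real.sqrt (1 - z^2) ^ 2 = 1 - z^2 := Real.sq_sqrt ha.le
  have sb2 : Real.sqrt (1 - k^2*z^2) ^ 2 = 1 - k^2*z^2 := Real.sq_sqrt hb.le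
  have h32 : (1 - k^2*z^2) ^ ((3:ℝ)/2) = (1 - k^2*z^2) * Real.sqrt (1 - k^2*z^2) := by
    rw [show ((3:ℝ)/2) = 1 + 1/2 by norm_num, Real.rpow_add hb, Real.rpow_one,
      ← Real.sqrt_eq_rpow]
  rw [h32, sb2]
  set u := Real.sqrt (1 - z^2) with hu
  set v := Real.sqrt (1 - k^2*z^2) with hv
  field_simp
  linear_combination (-k^2*v^2 - k^4*z^2) * sa2 + (1-k^2+k^2*z^2) * sb2
end

section
/- The complete elliptic integrals K(k) = ∫₀^{π/2} dθ/√(1-k²sin²θ) and E(k) = ∫₀^{π/2} √(1-k²sin²θ) dθ satisfy the Picard–Fuchs equations dK/dk = (E - (1-k²)K)/(k(1-k²)) and dE/dk = (E - K)/k for k ∈ (0,1). -/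
open Real MeasureTheory intervalIntegral Metric

open Real MeasureTheory intervalIntegral Metric

lemma pf_sqrt_deriv (s x : ℝ) (hu : 0 < 1 - x^2 * s^2) :
    HasDerivAt (fun x : ℝ => Real.sqrt (1 - x^2 * s^2)) (-(x * s^2) / Real.sqrt (1 - x^2*s^2)) x := by
  have h1 : HasDerivAt (fun x : ℝ => 1 - x^2 * s^2) (-(2*x*s^2)) x := by
    simpa using ((hasDerivAt_pow 2 x).mul_const (s^2)).const_sub 1
  have := (Real.hasDerivAt_sqrt hu.ne').comp x h1
  refine this.congr_deriv ?_
  field_simp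

lemma pf_inv_sqrt_deriv (s x : ℝ) (hu : 0 < 1 - x^2 * s^2) :
    HasDerivAt (fun x : ℝ => 1 / Real.sqrt (1 - x^2 * s^2))
      (x * s^2 / ((1 - x^2*s^2) * Real.sqrt (1 - x^2*s^2))) x := by
  have hΔ : (0:ℝ) < Real.sqrt (1 - x^2*s^2) := Real.sqrt_pos.2 hu
  have h := (pf_sqrt_deriv s x hu).inv hΔ.ne'
  have hsq : Real.sqrt (1 - x^2*s^2) ^ 2 = 1 - x^2*s^2 := Real.sq_sqrt hu.le
  simp only [one_div]
  refine h.congr_deriv ?_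
  rw [hsq]
  field_simp

lemma pf_alg (k S C D : ℝ) (hD : D ≠ 0) (hu : (1:ℝ) - k^2*S^2 ≠ 0)
    (h1 : (1:ℝ) - k^2 ≠ 0) (h0 : k ≠ 0)
    (hD2 : D^2 = 1 - k^2*S^2) (hC : C^2 = 1 - S^2) :
    k * S^2 / ((1 - k^2*S^2) * D) - (D - (1-k^2) * (1/D)) / (k*(1-k^2))
      = -(k/(1-k^2)) * (((C*C + S*(-S))*D - S*C*(-(k^2*(2*S*C))/(2*D))) / D^2) := by
  field_simp
  rw [hD2, hC]; ring

lemma pf_phi_deriv (k θ : ℝ) (hk0 : 0 < k) (hk1 : k < 1)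
    (hu : 0 < 1 - k^2 * Real.sin θ^2) :
    HasDerivAt (fun θ : ℝ => -(k/(1-k^2)) * (Real.sin θ * Real.cos θ / Real.sqrt (1 - k^2 * Real.sin θ^2)))
      (k * Real.sin θ^2 / ((1 - k^2*Real.sin θ^2) * Real.sqrt (1 - k^2*Real.sin θ^2))
        - (Real.sqrt (1 - k^2*Real.sin θ^2) - (1-k^2) * (1 / Real.sqrt (1 - k^2*Real.sin θ^2)))
            / (k * (1-k^2))) θ := by
  have hΔ : (0:ℝ) < Real.sqrt (1 - k^2*Real.sin θ^2) := Real.sqrt_pos.2 hu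
  have hnum : HasDerivAt (fun θ : ℝ => Real.sin θ * Real.cos θ)
      (Real.cos θ * Real.cos θ + Real.sin θ * (-Real.sin θ)) θ :=
    (Real.hasDerivAt_sin θ).mul (Real.hasDerivAt_cos θ)
  have hin : HasDerivAt (fun θ : ℝ => 1 - k^2 * Real.sin θ^2)
      (-(k^2 * (2 * Real.sin θ * Real.cos θ))) θ := by
    have := (((Real.hasDerivAt_sin θ).pow 2).const_mul (k^2)).const_sub 1
    refine this.congr_deriv ?_
    ring
  have hden : HasDerivAt (fun θ : ℝ => Real.sqrt (1 - k^2 * Real.sin θ^2))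
      (-(k^2 * (2 * Real.sin θ * Real.cos θ)) / (2 * Real.sqrt (1 - k^2*Real.sin θ^2))) θ := by
    have := (Real.hasDerivAt_sqrt hu.ne').comp θ hin
    refine this.congr_deriv ?_
    field_simp
  have h := (hnum.div hden hΔ.ne').const_mul (-(k/(1-k^2)))
  refine h.congr_deriv ?_
  have hk2 : (1:ℝ) - k^2 ≠ 0 := by nlinarith
  rw [pf_alg k (Real.sin θ) (Real.cos θ) (Real.sqrt (1 - k^2*Real.sin θ^2)) hΔ.ne' hu.ne'
      hk2 hk0.ne' (Real.sq_sqrt hu.le) (Real.cos_sq' θ)]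



open Real

/-- The complete elliptic integrals K(k), E(k) satisfy the Picard–Fuchs
    equations dK/dk = (E - (1-k²)K)/(k(1-k²)) and dE/dk = (E - K)/k
    for k ∈ (0,1). -/
theorem picard_fuchs (k : ℝ) (hk : k ∈ Set.Ioo (0:ℝ) 1) :
    HasDerivAt (fun k => ∫ θ in (0:ℝ)..(π/2), 1 / Real.sqrt (1 - k^2 * (Real.sin θ)^2))
      (((∫ θ in (0:ℝ)..(π/2), Real.sqrt (1 - k^2 * (Real.sin θ)^2))
          - (1 - k^2) * (∫ θ in (0:ℝ)..(π/2), 1 / Real.sqrt (1 - k^2 * (Real.sin θ)^2)))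
        / (k * (1 - k^2))) k ∧
    HasDerivAt (fun k => ∫ θ in (0:ℝ)..(π/2), Real.sqrt (1 - k^2 * (Real.sin θ)^2))
      (((∫ θ in (0:ℝ)..(π/2), Real.sqrt (1 - k^2 * (Real.sin θ)^2))
          - (∫ θ in (0:ℝ)..(π/2), 1 / Real.sqrt (1 - k^2 * (Real.sin θ)^2))) / k) k := by
  obtain ⟨hk0, hk1⟩ := hk
  set m : ℝ := (1+k)/2 with hm
  have hm1 : m < 1 := by rw [hm]; linarith
  have hm0 : 0 < m := by rw [hm]; linarith
  have hδ : 0 < 1 - m^2 := by nlinarith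
  set δ : ℝ := 1 - m^2 with hδdef
  set ε : ℝ := min k ((1-k)/2) with hεdef
  have hε : 0 < ε := lt_min hk0 (by linarith)
  have hball : ∀ x ∈ ball k ε, 0 < x ∧ x ≤ m := by
    intro x hx
    rw [mem_ball, Real.dist_eq, abs_lt] at hx
    constructor
    · have : ε ≤ k := min_le_left _ _
      linarith [hx.1]
    · have : ε ≤ (1-k)/2 := min_le_right _ _
      rw [hm]; linarith [hx.2]
  have hux : ∀ x ∈ ball k ε, ∀ θ : ℝ, δ ≤ 1 - x^2 * Real.sin θ^2 := by
    intro x hx θ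
    obtain ⟨hx0, hxm⟩ := hball x hx
    have hs : Real.sin θ^2 ≤ 1 := Real.sin_sq_le_one θ
    have hs0 : 0 ≤ Real.sin θ^2 := sq_nonneg _
    rw [hδdef]
    nlinarith
  have hkball : k ∈ ball k ε := mem_ball_self hε
  have hu : ∀ θ : ℝ, 0 < 1 - k^2 * Real.sin θ^2 := fun θ => lt_of_lt_of_le hδ (hux k hkball θ)
  -- continuity and integrability
  have contu : Continuous fun θ : ℝ => 1 - k^2 * Real.sin θ^2 :=
    continuous_const.sub (continuous_const.mul (Real.continuous_sin.pow 2))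
  have contΔ : Continuous fun θ : ℝ => Real.sqrt (1 - k^2 * Real.sin θ^2) :=
    Real.continuous_sqrt.comp contu
  have hΔpos : ∀ θ : ℝ, 0 < Real.sqrt (1 - k^2 * Real.sin θ^2) :=
    fun θ => Real.sqrt_pos.2 (hu θ)
  have hΔne : ∀ θ : ℝ, Real.sqrt (1 - k^2 * Real.sin θ^2) ≠ 0 := fun θ => (hΔpos θ).ne'
  have hIK : IntervalIntegrable (fun θ => 1 / Real.sqrt (1 - k^2 * Real.sin θ^2)) volume 0 (π/2) :=
    (continuous_const.div contΔ hΔne).intervalIntegrable _ _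
  have hIE : IntervalIntegrable (fun θ => Real.sqrt (1 - k^2 * Real.sin θ^2)) volume 0 (π/2) :=
    contΔ.intervalIntegrable _ _
  have contg : Continuous fun θ : ℝ =>
      k * Real.sin θ^2 / ((1 - k^2*Real.sin θ^2) * Real.sqrt (1 - k^2*Real.sin θ^2)) := by
    exact (continuous_const.mul (Real.continuous_sin.pow 2)).div (contu.mul contΔ)
      fun θ => mul_ne_zero (hu θ).ne' (hΔne θ)
  have hIg : IntervalIntegrable (fun θ =>
      k * Real.sin θ^2 / ((1 - k^2*Real.sin θ^2) * Real.sqrt (1 - k^2*Real.sin θ^2))) volume 0 (π/2) :=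
    contg.intervalIntegrable _ _
  have contgE : Continuous fun θ : ℝ =>
      -(k * Real.sin θ^2) / Real.sqrt (1 - k^2*Real.sin θ^2) := by
    exact ((continuous_const.mul (Real.continuous_sin.pow 2)).neg).div contΔ hΔne
  -- E part: differentiation under the integral
  have hδs : (0:ℝ) < Real.sqrt δ := Real.sqrt_pos.2 hδ
  have hnum_le : ∀ x ∈ ball k ε, ∀ θ : ℝ, x * Real.sin θ^2 ≤ 1 := by
    intro x hx θ
    obtain ⟨hx0, hxm⟩ := hball x hx
    have hs : Real.sin θ^2 ≤ 1 := Real.sin_sq_le_one θ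
    have hs0 : 0 ≤ Real.sin θ^2 := sq_nonneg _
    nlinarith
  have hE := hasDerivAt_integral_of_dominated_loc_of_deriv_le (μ := volume)
    (F := fun x θ => Real.sqrt (1 - x^2 * Real.sin θ^2))
    (F' := fun x θ => -(x * Real.sin θ^2) / Real.sqrt (1 - x^2 * Real.sin θ^2))
    (x₀ := k) (a := 0) (b := π/2) (bound := fun _ => (Real.sqrt δ)⁻¹) (ball_mem_nhds k hε)
    (Filter.Eventually.of_forall fun x =>
      (show Continuous (fun θ => Real.sqrt (1 - x^2 * Real.sin θ^2)) from Real.continuous_sqrt.comp (continuous_const.sub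
        (continuous_const.mul (Real.continuous_sin.pow 2)))).aestronglyMeasurable)
    hIE
    contgE.aestronglyMeasurable
    (Filter.Eventually.of_forall (fun θ _ x hx => by
      have h1 : δ ≤ 1 - x^2 * Real.sin θ^2 := hux x hx θ
      have h2 : Real.sqrt δ ≤ Real.sqrt (1 - x^2*Real.sin θ^2) := Real.sqrt_le_sqrt h1
      have h3 : 0 < x * Real.sin θ^2 ∨ 0 ≤ x * Real.sin θ^2 := Or.inr (by
        have := (hball x hx).1; positivity)
      rw [Real.norm_eq_abs, abs_div, abs_neg,
        abs_of_nonneg (by have := (hball x hx).1; positivity : (0:ℝ) ≤ x * Real.sin θ^2),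
        abs_of_nonneg (Real.sqrt_nonneg _), ← one_div]
      exact div_le_div₀ zero_le_one (hnum_le x hx θ) hδs h2))
    (intervalIntegrable_const)
    (Filter.Eventually.of_forall (fun θ _ x hx =>
      pf_sqrt_deriv (Real.sin θ) x (lt_of_lt_of_le hδ (hux x hx θ))))
  have hEval : (∫ θ in (0:ℝ)..(π/2), -(k * Real.sin θ^2) / Real.sqrt (1 - k^2 * Real.sin θ^2))
      = ((∫ θ in (0:ℝ)..(π/2), Real.sqrt (1 - k^2 * Real.sin θ^2))
          - (∫ θ in (0:ℝ)..(π/2), 1 / Real.sqrt (1 - k^2 * Real.sin θ^2))) / k := by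
    rw [← intervalIntegral.integral_sub hIE hIK, ← intervalIntegral.integral_div]
    apply intervalIntegral.integral_congr
    intro θ _
    have h1 := hu θ
    have h2 := hΔpos θ
    have hsq : Real.sqrt (1 - k^2*Real.sin θ^2)^2 = 1 - k^2*Real.sin θ^2 := Real.sq_sqrt h1.le
    field_simp
    linear_combination (-1:ℝ) * hsq
  -- K part
  have hδΔ : (0:ℝ) < δ * Real.sqrt δ := by positivity
  have hK := hasDerivAt_integral_of_dominated_loc_of_deriv_le (μ := volume)
    (F := fun x θ => 1 / Real.sqrt (1 - x^2 * Real.sin θ^2))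
    (F' := fun x θ => x * Real.sin θ^2 / ((1 - x^2*Real.sin θ^2) * Real.sqrt (1 - x^2 * Real.sin θ^2)))
    (x₀ := k) (a := 0) (b := π/2) (bound := fun _ => (δ * Real.sqrt δ)⁻¹) (ball_mem_nhds k hε)
    (Filter.Eventually.of_forall fun x =>
      ((measurable_const.div ((Real.continuous_sqrt.comp (continuous_const.sub
        (continuous_const.mul (Real.continuous_sin.pow 2)))).measurable))).aestronglyMeasurable)
    hIK
    contg.aestronglyMeasurable
    (Filter.Eventually.of_forall (fun θ _ x hx => by
      have h1 : δ ≤ 1 - x^2 * Real.sin θ^2 := hux x hx θ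
      have h1' : (0:ℝ) < 1 - x^2 * Real.sin θ^2 := lt_of_lt_of_le hδ h1
      have h2 : Real.sqrt δ ≤ Real.sqrt (1 - x^2*Real.sin θ^2) := Real.sqrt_le_sqrt h1
      have hden : δ * Real.sqrt δ ≤ (1 - x^2*Real.sin θ^2) * Real.sqrt (1 - x^2*Real.sin θ^2) :=
        mul_le_mul h1 h2 (Real.sqrt_nonneg _) h1'.le
      have hx0 := (hball x hx).1
      rw [Real.norm_eq_abs, abs_div,
        abs_of_nonneg (by positivity : (0:ℝ) ≤ x * Real.sin θ^2),
        abs_of_nonneg (by positivity : (0:ℝ) ≤ (1 - x^2*Real.sin θ^2) * Real.sqrt (1 - x^2*Real.sin θ^2)),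
        ← one_div]
      exact div_le_div₀ zero_le_one (hnum_le x hx θ) hδΔ hden))
    (intervalIntegrable_const)
    (Filter.Eventually.of_forall (fun θ _ x hx =>
      pf_inv_sqrt_deriv (Real.sin θ) x (lt_of_lt_of_le hδ (hux x hx θ))))
  -- value of the K-derivative integral
  have hψint : IntervalIntegrable (fun θ =>
      (Real.sqrt (1 - k^2*Real.sin θ^2) - (1-k^2) * (1 / Real.sqrt (1 - k^2*Real.sin θ^2)))
        / (k * (1-k^2))) volume 0 (π/2) :=
    (hIE.sub (hIK.const_mul _)).div_const _
  have hFTC : (∫ θ in (0:ℝ)..(π/2),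
      (k * Real.sin θ^2 / ((1 - k^2*Real.sin θ^2) * Real.sqrt (1 - k^2*Real.sin θ^2))
        - (Real.sqrt (1 - k^2*Real.sin θ^2) - (1-k^2) * (1 / Real.sqrt (1 - k^2*Real.sin θ^2)))
            / (k * (1-k^2)))) = 0 := by
    rw [intervalIntegral.integral_eq_sub_of_hasDerivAt
      (fun θ _ => pf_phi_deriv k θ hk0 hk1 (hu θ)) (hIg.sub hψint)]
    simp
  have hKval : (∫ θ in (0:ℝ)..(π/2),
        k * Real.sin θ^2 / ((1 - k^2*Real.sin θ^2) * Real.sqrt (1 - k^2*Real.sin θ^2)))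
      = ((∫ θ in (0:ℝ)..(π/2), Real.sqrt (1 - k^2 * Real.sin θ^2))
          - (1 - k^2) * (∫ θ in (0:ℝ)..(π/2), 1 / Real.sqrt (1 - k^2 * Real.sin θ^2)))
        / (k * (1 - k^2)) := by
    have hsub := intervalIntegral.integral_sub hIg hψint
    rw [hFTC] at hsub
    have : (∫ θ in (0:ℝ)..(π/2),
        k * Real.sin θ^2 / ((1 - k^2*Real.sin θ^2) * Real.sqrt (1 - k^2*Real.sin θ^2)))
      = ∫ θ in (0:ℝ)..(π/2),
        (Real.sqrt (1 - k^2*Real.sin θ^2) - (1-k^2) * (1 / Real.sqrt (1 - k^2*Real.sin θ^2)))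
          / (k * (1-k^2)) := by linarith [hsub.symm]
    rw [this, intervalIntegral.integral_div,
      intervalIntegral.integral_sub hIE (hIK.const_mul _),
      intervalIntegral.integral_const_mul]
  constructor
  · have := hK.2
    rw [hKval] at this
    exact this
  · have := hE.2
    rw [hEval] at this
    exact this
end
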